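/- Let h ≠ 0 and α ≠ 0 be real numbers and let W : ℝ → ℝ be differentiable. Define f(z,h) := 2α h^{-2} [ W'( h² z / (4α) ) − h² z/(4α) ]. Suppose u, v : ℝ × ℝ → ℝ are differentiable in their second (time) argument and satisfy u_t(x,t) = v(x,t) and v_t(x,t) = h^{-3}[ W'(h u(x+h,t) − h u(x,t)) − W'(h u(x,t) − h u(x−h,t)) ] for all (x,t). Define the discrete Riemann invariants U := 2α(D_h u + v) and V := 2α(D_h u − v), where D_h is the symmetric finite difference (D_h F)(x) := (F(x+h/2) − F(x−h/2))/h acting in the first argument. Then U and V satisfy exactly: U_t = D_h[ U + f(U+V, h) ] and V_t = −D_h[ V + f(U+V, h) ]. -/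

import Mathlib

/-- The symmetric finite difference operator `D_h`, acting in the spatial variable. -/
noncomputable def Dh (h : ℝ) (F : ℝ → ℝ) : ℝ → ℝ := fun x =>
  (F (x + h / 2) - F (x - h / 2)) / h

/-- The discrete Riemann invariants `U = 2α(D_h u + v)`, `V = 2α(D_h u − v)` of the
continuous FPUT system satisfy exactly `U_t = D_h[U + f(U+V)]`, `V_t = −D_h[V + f(U+V)]`. -/
theorem stmt_2 (h α : ℝ) (hh : h ≠ 0) (hα : α ≠ 0)
    (W : ℝ → ℝ) (hW : Differentiable ℝ W)
    (f : ℝ → ℝ)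
    (hf : ∀ z : ℝ, f z = 2 * α / h ^ 2 * (deriv W (h ^ 2 * z / (4 * α)) - h ^ 2 * z / (4 * α)))
    (u v : ℝ → ℝ → ℝ)
    (hut : ∀ x t : ℝ, HasDerivAt (fun s => u x s) (v x t) t)
    (hvt : ∀ x t : ℝ, HasDerivAt (fun s => v x s)
      ((1 / h ^ 3) * (deriv W (h * u (x + h) t - h * u x t)
        - deriv W (h * u x t - h * u (x - h) t))) t)
    (U V : ℝ → ℝ → ℝ)
    (hU : ∀ x t : ℝ, U x t = 2 * α * (Dh h (fun y => u y t) x + v x t))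
    (hV : ∀ x t : ℝ, V x t = 2 * α * (Dh h (fun y => u y t) x - v x t)) :
    ∀ x t : ℝ,
      HasDerivAt (fun s => U x s) (Dh h (fun y => U y t + f (U y t + V y t)) x) t ∧
      HasDerivAt (fun s => V x s) (-(Dh h (fun y => V y t + f (U y t + V y t)) x)) t := by
  intro x t
  -- simplify the argument of f
  have harg : ∀ y : ℝ, h ^ 2 * (U y t + V y t) / (4 * α)
      = h * u (y + h / 2) t - h * u (y - h / 2) t := by
    intro y
    rw [hU, hV]
    simp only [Dh]
    field_simp
    ring
  have hkey : ∀ y : ℝ, f (U y t + V y t)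
      = 2 * α / h ^ 2 * deriv W (h * u (y + h / 2) t - h * u (y - h / 2) t)
        - 2 * α * ((u (y + h / 2) t - u (y - h / 2) t) / h) := by
    intro y
    rw [hf, harg]
    field_simp
  have e1 : x + h / 2 + h / 2 = x + h := by ring
  have e2 : x + h / 2 - h / 2 = x := by ring
  have e3 : x - h / 2 + h / 2 = x := by ring
  have e4 : x - h / 2 - h / 2 = x - h := by ring
  have hrhs : Dh h (fun y => U y t + f (U y t + V y t)) x
      = 2 * α * ((v (x + h / 2) t - v (x - h / 2) t) / h
        + (1 / h ^ 3) * (deriv W (h * u (x + h) t - h * u x t)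
          - deriv W (h * u x t - h * u (x - h) t))) := by
    simp only [Dh]
    rw [hkey, hkey, hU, hU]
    simp only [Dh, e1, e2, e3, e4]
    field_simp
    ring
  have hrhs' : Dh h (fun y => V y t + f (U y t + V y t)) x
      = 2 * α * (-((v (x + h / 2) t - v (x - h / 2) t) / h)
        + (1 / h ^ 3) * (deriv W (h * u (x + h) t - h * u x t)
          - deriv W (h * u x t - h * u (x - h) t))) := by
    simp only [Dh]
    rw [hkey, hkey, hV, hV]
    simp only [Dh, e1, e2, e3, e4]
    field_simp
    ring
  have hdU : HasDerivAt (fun s => U x s)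
      (2 * α * ((v (x + h / 2) t - v (x - h / 2) t) / h
        + (1 / h ^ 3) * (deriv W (h * u (x + h) t - h * u x t)
          - deriv W (h * u x t - h * u (x - h) t)))) t := by
    have hfun : (fun s => U x s)
        = fun s => 2 * α * ((u (x + h / 2) s - u (x - h / 2) s) / h + v x s) := by
      funext s; rw [hU]; simp only [Dh]
    rw [hfun]
    exact ((((hut (x + h / 2) t).sub (hut (x - h / 2) t)).div_const h).add
      (hvt x t)).const_mul (2 * α)
  have hdV : HasDerivAt (fun s => V x s)
      (2 * α * ((v (x + h / 2) t - v (x - h / 2) t) / h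
        - (1 / h ^ 3) * (deriv W (h * u (x + h) t - h * u x t)
          - deriv W (h * u x t - h * u (x - h) t)))) t := by
    have hfun : (fun s => V x s)
        = fun s => 2 * α * ((u (x + h / 2) s - u (x - h / 2) s) / h - v x s) := by
      funext s; rw [hV]; simp only [Dh]
    rw [hfun]
    exact ((((hut (x + h / 2) t).sub (hut (x - h / 2) t)).div_const h).sub
      (hvt x t)).const_mul (2 * α)
  constructor
  · rw [hrhs]; exact hdU
  · rw [hrhs']
    convert hdV using 1
    ring
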